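/- Let n ≥ 2, let d_1, …, d_n be unit vectors in ℂ^m, and let ψ be a unit vector in ℂ^n (a pure input state of the particle, without quantum memory). Set ρ_A = ψψ^* and q_i = |ψ_i|². Then (P_s(q) − 1/n)² + V(ρ̃_A)² ≤ (1 − 1/n)². -/

import Mathlib

open Matrix ComplexOrder

noncomputable section

def ip {k : Type*} [Fintype k] (a b : k → ℂ) : ℂ := ∑ i, star (a i) * b i

/-- The optimal success probability of minimum-error discrimination of the detector
states `d i` with prior probabilities `q i`: the supremum over all POVMs
`Pov` (positive semidefinite matrices summing to the identity) of
`∑ i, q i * ⟨d i, Pov i (d i)⟩`. -/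
def Ps {m n : ℕ} (d : Fin n → Fin m → ℂ) (q : Fin n → ℝ) : ℝ :=
  sSup { x : ℝ | ∃ Pov : Fin n → Matrix (Fin m) (Fin m) ℂ,
    (∀ i, (Pov i).PosSemidef) ∧ (∑ i, Pov i) = 1 ∧
    x = ∑ i, q i * (ip (d i) ((Pov i) *ᵥ (d i))).re }

/-- The visibility `V(ρ̃_A) = √( (2(n−1)/n²) ∑_{i≠k} |⟨d_k, d_i⟩|² |(ρ_A)_{ik}|² )`. -/
def Vis {m n : ℕ} (d : Fin n → Fin m → ℂ) (ρ : Matrix (Fin n) (Fin n) ℂ) : ℝ :=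
  Real.sqrt ((2 * ((n : ℝ) - 1) / (n : ℝ) ^ 2) *
    ∑ i, ∑ k, if i = k then 0 else ‖ip (d k) (d i)‖ ^ 2 * ‖ρ i k‖ ^ 2)

/-- The post-interaction detector state `ρ̃_D = ∑ i, q i • d i (d i)^*`. -/
def detState {m n : ℕ} (d : Fin n → Fin m → ℂ) (q : Fin n → ℝ) :
    Matrix (Fin m) (Fin m) ℂ :=
  ∑ i, (q i : ℂ) • vecMulVec (d i) (star (d i))

/-- The post-interaction particle state `(ρ̃_A)_{ik} = ⟨d_k, d_i⟩ (ρ_A)_{ik}`. -/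
def post {m n : ℕ} (d : Fin n → Fin m → ℂ) (ρ : Matrix (Fin n) (Fin n) ℂ) :
    Matrix (Fin n) (Fin n) ℂ :=
  Matrix.of fun i k => ip (d k) (d i) * ρ i k

/-- The purity `Tr(ρ²)` (as a real number). -/
def purity {k : Type*} [Fintype k] (ρ : Matrix k k ℂ) : ℝ := ((ρ * ρ).trace).re


namespace AuxWPD

lemma ip_eq_dot {k : Type*} [Fintype k] (a b : k → ℂ) : ip a b = star a ⬝ᵥ b := by
  simp [ip, dotProduct]

lemma ip_sub_right {k : Type*} [Fintype k] (a b c : k → ℂ) :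
    ip a (b - c) = ip a b - ip a c := by
  simp [ip, mul_sub, Finset.sum_sub_distrib]

lemma ip_add_right {k : Type*} [Fintype k] (a b c : k → ℂ) :
    ip a (b + c) = ip a b + ip a c := by
  simp [ip, mul_add, Finset.sum_add_distrib]

lemma ip_sum_right {k ι : Type*} [Fintype k] (s : Finset ι) (a : k → ℂ) (w : ι → k → ℂ) :
    ip a (∑ i ∈ s, w i) = ∑ i ∈ s, ip a (w i) := by
  simp only [ip, Finset.sum_apply, Finset.mul_sum]
  exact Finset.sum_comm

lemma ip_conj {k : Type*} [Fintype k] (a b : k → ℂ) : ip a b = star (ip b a) := by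
  simp [ip, star_sum, mul_comm]

lemma sum_mulVec {m ι : Type*} [Fintype m] (s : Finset ι) (A : ι → Matrix m m ℂ) (v : m → ℂ) :
    (∑ i ∈ s, A i) *ᵥ v = ∑ i ∈ s, (A i *ᵥ v) := by
  ext j
  simp only [Matrix.mulVec, dotProduct, Matrix.sum_apply, Finset.sum_apply, Finset.sum_mul]
  rw [Finset.sum_comm]

lemma ip_cs {k : Type*} [Fintype k] (a b : k → ℂ) :
    ‖ip a b‖ ^ 2 ≤ (ip a a).re * (ip b b).re := by
  set a' : EuclideanSpace ℂ k := (WithLp.equiv 2 _).symm a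
  set b' : EuclideanSpace ℂ k := (WithLp.equiv 2 _).symm b
  have h : ∀ u v : k → ℂ, ip u v =
      (inner ℂ ((WithLp.equiv 2 _).symm u) ((WithLp.equiv 2 _).symm v) : ℂ) := by
    intro u v
    simp [ip, PiLp.inner_apply, RCLike.inner_apply, Complex.star_def, mul_comm]
  have hre : ∀ z : ℂ, z.re = RCLike.re z := fun _ => rfl
  rw [h a b, h a a, h b b, hre, hre, inner_self_eq_norm_sq, inner_self_eq_norm_sq]
  calc ‖(inner ℂ a' b' : ℂ)‖ ^ 2 ≤ (‖a'‖ * ‖b'‖) ^ 2 := by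
        have := norm_inner_le_norm (𝕜 := ℂ) a' b'
        exact pow_le_pow_left₀ (norm_nonneg _) this 2
    _ = ‖a'‖ ^ 2 * ‖b'‖ ^ 2 := by ring

lemma ip_hermitian {k : Type*} [Fintype k] {S : Matrix k k ℂ} (hS : S.IsHermitian)
    (u w : k → ℂ) : ip (S *ᵥ u) w = ip u (S *ᵥ w) := by
  simp only [ip, Matrix.mulVec, dotProduct, star_sum, star_mul', Finset.sum_mul,
    Finset.mul_sum]
  rw [Finset.sum_comm]
  refine Finset.sum_congr rfl fun i _ => Finset.sum_congr rfl fun j _ => ?_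
  rw [hS.apply i j]
  ring

open scoped MatrixOrder in
lemma psd_cs {k : Type*} [Fintype k] [DecidableEq k] {M : Matrix k k ℂ} (hM : M.PosSemidef)
    (u v : k → ℂ) :
    ‖ip u (M *ᵥ v)‖ ^ 2 ≤ (ip u (M *ᵥ u)).re * (ip v (M *ᵥ v)).re := by
  have hs := CFC.sqrt_mul_sqrt_self M hM.nonneg
  have hherm := (CFC.sqrt_nonneg M).posSemidef.1
  have key : ∀ x y : k → ℂ, ip x (M *ᵥ y) = ip (CFC.sqrt M *ᵥ x) (CFC.sqrt M *ᵥ y) := by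
    intro x y
    rw [ip_hermitian hherm, Matrix.mulVec_mulVec, hs]
  rw [key u v, key u u, key v v]
  exact ip_cs _ _

lemma psd_re_nonneg {k : Type*} [Fintype k] {M : Matrix k k ℂ} (hM : M.PosSemidef)
    (u : k → ℂ) : 0 ≤ (ip u (M *ᵥ u)).re := by
  have := hM.dotProduct_mulVec_nonneg u
  rw [ip_eq_dot]
  exact (Complex.le_def.mp this).1

end AuxWPD

namespace AuxWPD

lemma two_var_ineq {p r C x y : ℝ} (hp : 0 ≤ p) (hr : 0 ≤ r) (hC : 0 ≤ C)
    (hx1 : 0 ≤ 1 - x) (hx2 : 0 ≤ 1 + x) (hy1 : 0 ≤ 1 - y) (hy2 : 0 ≤ 1 + y)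
    (h2c : 2 * C ≤ Real.sqrt ((1 - x) * (1 - y)) + Real.sqrt ((1 + x) * (1 + y))) :
    p * x - r * y ≤ Real.sqrt ((p + r) ^ 2 - 4 * (p * r) * C ^ 2) := by
  rcases le_or_gt (p * x - r * y) 0 with h | h
  · exact h.trans (Real.sqrt_nonneg _)
  set s1 := Real.sqrt ((1 - x) * (1 - y)) with hs1
  set s2 := Real.sqrt ((1 + x) * (1 + y)) with hs2
  set t1 := Real.sqrt ((1 - x) * (1 + x)) with ht1
  set t2 := Real.sqrt ((1 - y) * (1 + y)) with ht2
  have hs1sq : s1 ^ 2 = (1 - x) * (1 - y) := Real.sq_sqrt (mul_nonneg hx1 hy1)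
  have hs2sq : s2 ^ 2 = (1 + x) * (1 + y) := Real.sq_sqrt (mul_nonneg hx2 hy2)
  have ht1sq : t1 ^ 2 = (1 - x) * (1 + x) := Real.sq_sqrt (mul_nonneg hx1 hx2)
  have ht2sq : t2 ^ 2 = (1 - y) * (1 + y) := Real.sq_sqrt (mul_nonneg hy1 hy2)
  have hprod : s1 * s2 = t1 * t2 := by
    rw [hs1, hs2, ht1, ht2, ← Real.sqrt_mul (mul_nonneg hx1 hy1),
      ← Real.sqrt_mul (mul_nonneg hx1 hx2)]
    ring_nf
  have hsq : (2 * C) ^ 2 ≤ (s1 + s2) ^ 2 :=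
    pow_le_pow_left₀ (by linarith) h2c 2
  have hkey : 4 * C ^ 2 ≤ 2 + 2 * (x * y) + 2 * (t1 * t2) := by
    have : (s1 + s2) ^ 2 = s1 ^ 2 + s2 ^ 2 + 2 * (s1 * s2) := by ring
    rw [this, hs1sq, hs2sq, hprod] at hsq
    nlinarith [hsq]
  have hC2 : C ^ 2 ≤ 1 := by
    nlinarith [sq_nonneg (t1 - t2), ht1sq, ht2sq, sq_nonneg (x - y)]
  have hnn : 0 ≤ (p + r) ^ 2 - 4 * (p * r) * C ^ 2 := by
    nlinarith [sq_nonneg (p - r), mul_nonneg (mul_nonneg hp hr) (sub_nonneg.mpr hC2)]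
  rw [Real.le_sqrt h.le hnn]
  have e1 : p ^ 2 * t1 ^ 2 = p ^ 2 * ((1 - x) * (1 + x)) := by rw [ht1sq]
  have e2 : r ^ 2 * t2 ^ 2 = r ^ 2 * ((1 - y) * (1 + y)) := by rw [ht2sq]
  nlinarith [sq_nonneg (p * t1 - r * t2),
    mul_nonneg (mul_nonneg hp hr) (sub_nonneg.mpr hkey), e1, e2]

end AuxWPD

namespace AuxWPD

lemma sum_psd {m n : ℕ} (Pov : Fin n → Matrix (Fin m) (Fin m) ℂ)
    (hP : ∀ i, (Pov i).PosSemidef) (s : Finset (Fin n)) :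
    (∑ j ∈ s, Pov j).PosSemidef :=
  Finset.sum_induction Pov Matrix.PosSemidef (fun _ _ ha hb => ha.add hb)
    Matrix.PosSemidef.zero (fun j _ => hP j)

lemma pair_bound {m n : ℕ} (d : Fin n → Fin m → ℂ) (hd : ∀ i, ip (d i) (d i) = 1)
    (q : Fin n → ℝ) (hq0 : ∀ i, 0 ≤ q i)
    (Pov : Fin n → Matrix (Fin m) (Fin m) ℂ)
    (hP : ∀ i, (Pov i).PosSemidef) (hsum : (∑ i, Pov i) = 1)
    (i k : Fin n) :
    q i * (ip (d i) ((Pov i - Pov k) *ᵥ d i)).re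
      - q k * (ip (d k) ((Pov i - Pov k) *ᵥ d k)).re
      ≤ Real.sqrt ((q i + q k) ^ 2 - 4 * (q i * q k) * ‖ip (d k) (d i)‖ ^ 2) := by
  set X := Pov i - Pov k with hX
  have hplus : ((1 : Matrix (Fin m) (Fin m) ℂ) + X).PosSemidef := by
    have h1 : (1 : Matrix (Fin m) (Fin m) ℂ) + X
        = (∑ j ∈ Finset.univ.erase k, Pov j) + Pov i := by
      rw [← hsum, ← Finset.sum_erase_add Finset.univ Pov (Finset.mem_univ k), hX]
      abel
    rw [h1]
    exact (sum_psd Pov hP _).add (hP i)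
  have hminus : ((1 : Matrix (Fin m) (Fin m) ℂ) - X).PosSemidef := by
    have h1 : (1 : Matrix (Fin m) (Fin m) ℂ) - X
        = (∑ j ∈ Finset.univ.erase i, Pov j) + Pov k := by
      rw [← hsum, ← Finset.sum_erase_add Finset.univ Pov (Finset.mem_univ i), hX]
      abel
    rw [h1]
    exact (sum_psd Pov hP _).add (hP k)
  set xr := (ip (d i) (X *ᵥ d i)).re with hxr
  set yr := (ip (d k) (X *ᵥ d k)).re with hyr
  have expand : ∀ (u v : Fin n → ℂ) (M : Matrix (Fin m) (Fin m) ℂ), True := fun _ _ _ => trivial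
  have hre_minus : ∀ u v : Fin m → ℂ,
      ip u (((1 : Matrix (Fin m) (Fin m) ℂ) - X) *ᵥ v) = ip u v - ip u (X *ᵥ v) := by
    intro u v
    rw [Matrix.sub_mulVec, Matrix.one_mulVec, ip_sub_right]
  have hre_plus : ∀ u v : Fin m → ℂ,
      ip u (((1 : Matrix (Fin m) (Fin m) ℂ) + X) *ᵥ v) = ip u v + ip u (X *ᵥ v) := by
    intro u v
    rw [Matrix.add_mulVec, Matrix.one_mulVec, ip_add_right]
  have hdm : ∀ u : Fin n → ℂ, True := fun _ => trivial
  have hx1 : 0 ≤ 1 - xr := by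
    have h := psd_re_nonneg hminus (d i)
    rwa [hre_minus, Complex.sub_re, hd i, Complex.one_re] at h
  have hx2 : 0 ≤ 1 + xr := by
    have h := psd_re_nonneg hplus (d i)
    rwa [hre_plus, Complex.add_re, hd i, Complex.one_re] at h
  have hy1 : 0 ≤ 1 - yr := by
    have h := psd_re_nonneg hminus (d k)
    rwa [hre_minus, Complex.sub_re, hd k, Complex.one_re] at h
  have hy2 : 0 ≤ 1 + yr := by
    have h := psd_re_nonneg hplus (d k)
    rwa [hre_plus, Complex.add_re, hd k, Complex.one_re] at h
  set t := ip (d i) (d k) with ht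
  set z := ip (d i) (X *ᵥ d k) with hz
  have hA : ‖t - z‖ ≤ Real.sqrt ((1 - xr) * (1 - yr)) := by
    have h := psd_cs hminus (d i) (d k)
    rw [hre_minus (d i) (d k), hre_minus (d i) (d i), hre_minus (d k) (d k),
      Complex.sub_re, Complex.sub_re, hd i, hd k, Complex.one_re] at h
    exact (Real.le_sqrt (norm_nonneg _) (mul_nonneg hx1 hy1)).mpr h
  have hB : ‖t + z‖ ≤ Real.sqrt ((1 + xr) * (1 + yr)) := by
    have h := psd_cs hplus (d i) (d k)
    rw [hre_plus (d i) (d k), hre_plus (d i) (d i), hre_plus (d k) (d k),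
      Complex.add_re, Complex.add_re, hd i, hd k, Complex.one_re] at h
    exact (Real.le_sqrt (norm_nonneg _) (mul_nonneg hx2 hy2)).mpr h
  have hnorm : ‖ip (d k) (d i)‖ = ‖t‖ := by
    rw [ht, ip_conj (d i) (d k), norm_star]
  have h2c : 2 * ‖ip (d k) (d i)‖ ≤
      Real.sqrt ((1 - xr) * (1 - yr)) + Real.sqrt ((1 + xr) * (1 + yr)) := by
    rw [hnorm]
    have : 2 * ‖t‖ = ‖(t - z) + (t + z)‖ := by
      have : (t - z) + (t + z) = 2 * t := by ring
      rw [this]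
      simp [norm_mul]
    rw [this]
    exact (norm_add_le _ _).trans (add_le_add hA hB)
  exact two_var_ineq (hq0 i) (hq0 k) (norm_nonneg _) hx1 hx2 hy1 hy2 h2c

end AuxWPD

namespace AuxWPD

lemma povm_value_bound {m n : ℕ} (hn : 0 < n) (d : Fin n → Fin m → ℂ)
    (hd : ∀ i, ip (d i) (d i) = 1)
    (q : Fin n → ℝ) (hq0 : ∀ i, 0 ≤ q i) (hq1 : ∑ i, q i = 1)
    (Pov : Fin n → Matrix (Fin m) (Fin m) ℂ)
    (hP : ∀ i, (Pov i).PosSemidef) (hsum : (∑ i, Pov i) = 1) :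
    ∑ i, q i * (ip (d i) ((Pov i) *ᵥ (d i))).re ≤
      1 / n + (∑ i, ∑ k, if i = k then 0 else
        Real.sqrt ((q i + q k) ^ 2 - 4 * (q i * q k) * ‖ip (d k) (d i)‖ ^ 2)) / (2 * n) := by
  set y : Fin n → Fin n → ℝ := fun i k => (ip (d k) (Pov i *ᵥ d k)).re with hy
  set P : ℝ := ∑ i, q i * y i i with hPdef
  set SumA : ℝ := ∑ i, ∑ k, if i = k then 0 else
      Real.sqrt ((q i + q k) ^ 2 - 4 * (q i * q k) * ‖ip (d k) (d i)‖ ^ 2) with hSumA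
  have hcol : ∀ k, ∑ i, y i k = 1 := by
    intro k
    have h1 : ∑ i, ip (d k) (Pov i *ᵥ d k) = ip (d k) ((∑ i, Pov i) *ᵥ d k) := by
      rw [sum_mulVec, ip_sum_right]
    have h2 : ∑ i, y i k = (∑ i, ip (d k) (Pov i *ᵥ d k)).re := by
      rw [Complex.re_sum]
    rw [h2, h1, hsum, Matrix.one_mulVec, hd k, Complex.one_re]
  have key : (n : ℝ) * P - 1 = ∑ i, ∑ k, (q i * y i i - q k * y i k) := by
    have h1 : ∑ i, ∑ k : Fin n, q i * y i i = (n : ℝ) * P := by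
      rw [hPdef, Finset.mul_sum]
      refine Finset.sum_congr rfl fun i _ => ?_
      rw [Finset.sum_const, Finset.card_univ, Fintype.card_fin, nsmul_eq_mul]
    have h2 : ∑ i, ∑ k, q k * y i k = 1 := by
      rw [Finset.sum_comm]
      have : ∀ k, ∑ i, q k * y i k = q k := by
        intro k
        rw [← Finset.mul_sum, hcol k, mul_one]
      simp only [this, hq1]
    simp only [Finset.sum_sub_distrib, h1, h2]
  have key2 : 2 * ((n : ℝ) * P - 1)
      = ∑ i, ∑ k, ((q i * y i i - q k * y i k) + (q k * y k k - q i * y k i)) := by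
    have h3 : ∑ i, ∑ k, (q k * y k k - q i * y k i)
        = ∑ i, ∑ k, (q i * y i i - q k * y i k) := Finset.sum_comm
    simp only [Finset.sum_add_distrib, h3]
    rw [← key]; ring
  have hterm : ∀ i k : Fin n, (q i * y i i - q k * y i k) + (q k * y k k - q i * y k i)
      ≤ (if i = k then 0 else
        Real.sqrt ((q i + q k) ^ 2 - 4 * (q i * q k) * ‖ip (d k) (d i)‖ ^ 2)) := by
    intro i k
    by_cases h : i = k
    · subst h; rw [if_pos rfl]
      have : q i * y i i - q i * y i i + (q i * y i i - q i * y i i) = 0 := by ring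
      linarith
    · rw [if_neg h]
      have hb := pair_bound d hd q hq0 Pov hP hsum i k
      have e1 : (ip (d i) ((Pov i - Pov k) *ᵥ d i)).re = y i i - y k i := by
        rw [Matrix.sub_mulVec, ip_sub_right, Complex.sub_re]
      have e2 : (ip (d k) ((Pov i - Pov k) *ᵥ d k)).re = y i k - y k k := by
        rw [Matrix.sub_mulVec, ip_sub_right, Complex.sub_re]
      rw [e1, e2] at hb
      linarith
  have hle : 2 * ((n : ℝ) * P - 1) ≤ SumA := by
    rw [key2, hSumA]
    exact Finset.sum_le_sum fun i _ => Finset.sum_le_sum fun k _ => hterm i k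
  have hnpos : (0 : ℝ) < n := by exact_mod_cast hn
  have hT : (n : ℝ) * (1 / n + SumA / (2 * n)) = 1 + SumA / 2 := by
    field_simp
  have : (n : ℝ) * P ≤ (n : ℝ) * (1 / n + SumA / (2 * n)) := by
    rw [hT]; linarith
  exact le_of_mul_le_mul_left this hnpos

lemma Ps_facts {m n : ℕ} (hn : 2 ≤ n) (d : Fin n → Fin m → ℂ)
    (hd : ∀ i, ip (d i) (d i) = 1)
    (q : Fin n → ℝ) (hq0 : ∀ i, 0 ≤ q i) (hq1 : ∑ i, q i = 1) :
    1 / (n : ℝ) ≤ Ps d q ∧ Ps d q ≤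
      1 / n + (∑ i, ∑ k, if i = k then 0 else
        Real.sqrt ((q i + q k) ^ 2 - 4 * (q i * q k) * ‖ip (d k) (d i)‖ ^ 2)) / (2 * n) := by
  have hn0 : 0 < n := by omega
  have hnpos : (0 : ℝ) < n := by exact_mod_cast hn0
  set SumA : ℝ := ∑ i, ∑ k, if i = k then 0 else
      Real.sqrt ((q i + q k) ^ 2 - 4 * (q i * q k) * ‖ip (d k) (d i)‖ ^ 2) with hSumA
  have hSumA0 : 0 ≤ SumA := by
    refine Finset.sum_nonneg fun i _ => Finset.sum_nonneg fun k _ => ?_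
    split
    · exact le_refl 0
    · exact Real.sqrt_nonneg _
  have hB0 : (0 : ℝ) ≤ 1 / n + SumA / (2 * n) := by positivity
  have hub : Ps d q ≤ 1 / n + SumA / (2 * n) := by
    refine Real.sSup_le ?_ hB0
    rintro x ⟨Pov, hP, hsum, rfl⟩
    exact povm_value_bound hn0 d hd q hq0 hq1 Pov hP hsum
  have hbdd : BddAbove { x : ℝ | ∃ Pov : Fin n → Matrix (Fin m) (Fin m) ℂ,
      (∀ i, (Pov i).PosSemidef) ∧ (∑ i, Pov i) = 1 ∧
      x = ∑ i, q i * (ip (d i) ((Pov i) *ᵥ (d i))).re } := by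
    refine ⟨1 / n + SumA / (2 * n), ?_⟩
    rintro x ⟨Pov, hP, hsum, rfl⟩
    exact povm_value_bound hn0 d hd q hq0 hq1 Pov hP hsum
  have hmem : ∀ i₀ : Fin n, q i₀ ∈ { x : ℝ | ∃ Pov : Fin n → Matrix (Fin m) (Fin m) ℂ,
      (∀ i, (Pov i).PosSemidef) ∧ (∑ i, Pov i) = 1 ∧
      x = ∑ i, q i * (ip (d i) ((Pov i) *ᵥ (d i))).re } := by
    intro i₀
    refine ⟨fun j => if j = i₀ then 1 else 0, fun i => ?_, ?_, ?_⟩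
    · dsimp only
      split
      · exact Matrix.PosSemidef.one
      · exact Matrix.PosSemidef.zero
    · simp
    · have : ∀ i : Fin n, q i * (ip (d i) (((if i = i₀ then (1 : Matrix (Fin m) (Fin m) ℂ)
          else 0)) *ᵥ (d i))).re = if i = i₀ then q i else 0 := by
        intro i
        split
        · rw [Matrix.one_mulVec, hd i, Complex.one_re, mul_one]
        · rw [Matrix.zero_mulVec]
          simp [ip]
      simp only [this, Finset.sum_ite_eq', Finset.mem_univ, if_pos]
  have hex : ∃ i₀ : Fin n, 1 / (n : ℝ) ≤ q i₀ := by
    by_contra hcon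
    push_neg at hcon
    have : ∑ i, q i < ∑ _i : Fin n, 1 / (n : ℝ) := by
      have : Nonempty (Fin n) := ⟨⟨0, hn0⟩⟩
      exact Finset.sum_lt_sum_of_nonempty Finset.univ_nonempty (fun i _ => hcon i)
    rw [hq1, Finset.sum_const, Finset.card_univ, Fintype.card_fin, nsmul_eq_mul] at this
    rw [mul_one_div, div_self (ne_of_gt hnpos)] at this
    exact lt_irrefl 1 this
  obtain ⟨i₀, hi₀⟩ := hex
  exact ⟨hi₀.trans (le_csSup hbdd (hmem i₀)), hub⟩

end AuxWPD

namespace AuxWPD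

lemma sum_split {n : ℕ} (f : Fin n → ℝ) (i : Fin n) :
    ∑ k, (if i = k then 0 else f k) = (∑ k, f k) - f i := by
  have h : ∀ k, (if i = k then 0 else f k) = f k - (if i = k then f k else 0) := by
    intro k; split <;> simp
  simp only [h, Finset.sum_sub_distrib, Finset.sum_ite_eq, Finset.mem_univ, if_pos]

lemma alg_lemma {n : ℕ} (hn : 2 ≤ n) (q : Fin n → ℝ) (hq0 : ∀ i, 0 ≤ q i)
    (hq1 : ∑ i, q i = 1)
    (c : Fin n → Fin n → ℝ) (hc1 : ∀ i k, c i k ^ 2 ≤ 1) :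
    ((∑ i, ∑ k, if i = k then 0 else
        Real.sqrt ((q i + q k) ^ 2 - 4 * (q i * q k) * c i k ^ 2)) / (2 * n)) ^ 2
      + (2 * ((n : ℝ) - 1) / (n : ℝ) ^ 2) *
        (∑ i, ∑ k, if i = k then 0 else c i k ^ 2 * (q i * q k))
      ≤ (((n : ℝ) - 1) / n) ^ 2 := by
  have hnpos : (0 : ℝ) < n := by
    have : 0 < n := by omega
    exact_mod_cast this
  set a : Fin n → Fin n → ℝ := fun i k =>
    Real.sqrt ((q i + q k) ^ 2 - 4 * (q i * q k) * c i k ^ 2) with ha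
  have hargnn : ∀ i k, 0 ≤ (q i + q k) ^ 2 - 4 * (q i * q k) * c i k ^ 2 := by
    intro i k
    nlinarith [hc1 i k, sq_nonneg (q i - q k), mul_nonneg (hq0 i) (hq0 k),
      mul_nonneg (mul_nonneg (hq0 i) (hq0 k)) (sub_nonneg.mpr (hc1 i k))]
  have ha2 : ∀ i k, a i k ^ 2 = (q i + q k) ^ 2 - 4 * (q i * q k) * c i k ^ 2 :=
    fun i k => Real.sq_sqrt (hargnn i k)
  have ha0 : ∀ i k, 0 ≤ a i k := fun i k => Real.sqrt_nonneg _
  have haw : ∀ i k, a i k ≤ q i + q k := by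
    intro i k
    rw [ha]
    calc Real.sqrt ((q i + q k) ^ 2 - 4 * (q i * q k) * c i k ^ 2)
        ≤ Real.sqrt ((q i + q k) ^ 2) := by
          apply Real.sqrt_le_sqrt
          nlinarith [mul_nonneg (hq0 i) (hq0 k), sq_nonneg (c i k)]
      _ = q i + q k := Real.sqrt_sq (by linarith [hq0 i, hq0 k])
  have hwle1 : ∀ i k : Fin n, i ≠ k → q i + q k ≤ 1 := by
    intro i k hik
    have hsub : ({i, k} : Finset (Fin n)) ⊆ Finset.univ := Finset.subset_univ _
    have := Finset.sum_le_sum_of_subset_of_nonneg hsub (fun j _ _ => hq0 j)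
    rw [Finset.sum_pair hik, hq1] at this
    exact this
  -- Cauchy–Schwarz over pairs
  set F : Fin n × Fin n → ℝ := fun p =>
    if p.1 = p.2 then 0 else Real.sqrt (q p.1 + q p.2) with hF
  set G : Fin n × Fin n → ℝ := fun p =>
    if p.1 = p.2 then 0 else
      (if q p.1 + q p.2 = 0 then 0 else a p.1 p.2 / Real.sqrt (q p.1 + q p.2)) with hG
  have hFG : ∀ p : Fin n × Fin n, F p * G p = (if p.1 = p.2 then 0 else a p.1 p.2) := by
    intro p
    simp only [hF, hG]
    by_cases h : p.1 = p.2
    · simp [h]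
    · simp only [if_neg h]
      by_cases hw : q p.1 + q p.2 = 0
      · rw [if_pos hw, mul_zero]
        have h1 : q p.1 = 0 := by have := hq0 p.1; have := hq0 p.2; linarith
        have h2 : q p.2 = 0 := by have := hq0 p.1; have := hq0 p.2; linarith
        rw [ha]
        simp [h1, h2]
      · rw [if_neg hw]
        have hwpos : 0 < q p.1 + q p.2 :=
          lt_of_le_of_ne (by linarith [hq0 p.1, hq0 p.2]) (Ne.symm hw)
        have hs : Real.sqrt (q p.1 + q p.2) ≠ 0 :=
          ne_of_gt (Real.sqrt_pos.mpr hwpos)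
        field_simp
  have hF2 : ∀ p : Fin n × Fin n, F p ^ 2 = (if p.1 = p.2 then 0 else q p.1 + q p.2) := by
    intro p
    simp only [hF]
    by_cases h : p.1 = p.2
    · simp [h]
    · rw [if_neg h, if_neg h]
      exact Real.sq_sqrt (by linarith [hq0 p.1, hq0 p.2])
  have hG2 : ∀ p : Fin n × Fin n, G p ^ 2 ≤
      (if p.1 = p.2 then 0 else (q p.1 + q p.2) - 4 * (c p.1 p.2 ^ 2 * (q p.1 * q p.2))) := by
    intro p
    simp only [hG]
    by_cases h : p.1 = p.2
    · simp [h]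
    · rw [if_neg h, if_neg h]
      by_cases hw : q p.1 + q p.2 = 0
      · rw [if_pos hw]
        have h1 : q p.1 = 0 := by have := hq0 p.1; have := hq0 p.2; linarith
        simp only [h1, hw]
        simp [hq0 p.2]
      · rw [if_neg hw]
        have hwpos : 0 < q p.1 + q p.2 :=
          lt_of_le_of_ne (by linarith [hq0 p.1, hq0 p.2]) (Ne.symm hw)
        have hspos : 0 < Real.sqrt (q p.1 + q p.2) := Real.sqrt_pos.mpr hwpos
        rw [div_pow, Real.sq_sqrt hwpos.le, div_le_iff₀ hwpos]
        have hle : a p.1 p.2 ^ 2 ≤ (q p.1 + q p.2) ^ 2 := by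
          rw [ha2]
          nlinarith [mul_nonneg (hq0 p.1) (hq0 p.2), sq_nonneg (c p.1 p.2)]
        have hw1 : q p.1 + q p.2 ≤ 1 := hwle1 p.1 p.2 h
        rw [ha2]
        nlinarith [hwpos, hw1, mul_nonneg (mul_nonneg (hq0 p.1) (hq0 p.2)) (sq_nonneg (c p.1 p.2))]
  -- sum computations
  set SumA : ℝ := ∑ i, ∑ k, if i = k then 0 else a i k with hSA
  set Svis : ℝ := ∑ i, ∑ k, if i = k then 0 else c i k ^ 2 * (q i * q k) with hSV
  have hsum1 : ∑ p : Fin n × Fin n, F p * G p = SumA := by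
    rw [hSA, ← Finset.sum_product', Finset.univ_product_univ]
    exact Finset.sum_congr rfl fun p _ => hFG p
  have hsumF2 : ∑ p : Fin n × Fin n, F p ^ 2 = 2 * ((n : ℝ) - 1) := by
    have h1 : ∑ p : Fin n × Fin n, F p ^ 2
        = ∑ i, ∑ k, (if i = k then 0 else q i + q k) := by
      rw [← Finset.sum_product', Finset.univ_product_univ]
      exact Finset.sum_congr rfl fun p _ => hF2 p
    rw [h1]
    have h2 : ∀ i, ∑ k, (if i = k then 0 else q i + q k)
        = ((n : ℝ) * q i + 1) - 2 * q i := by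
      intro i
      rw [sum_split (fun k => q i + q k) i]
      have : ∑ k : Fin n, (q i + q k) = (n : ℝ) * q i + 1 := by
        rw [Finset.sum_add_distrib, Finset.sum_const, Finset.card_univ, Fintype.card_fin,
          nsmul_eq_mul, hq1]
      rw [this]; ring
    simp only [h2]
    rw [Finset.sum_sub_distrib, Finset.sum_add_distrib, ← Finset.mul_sum, ← Finset.mul_sum,
      hq1, Finset.sum_const, Finset.card_univ, Fintype.card_fin, nsmul_eq_mul]
    ring
  have hsumG2 : ∑ p : Fin n × Fin n, G p ^ 2 ≤ 2 * ((n : ℝ) - 1) - 4 * Svis := by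
    calc ∑ p : Fin n × Fin n, G p ^ 2
        ≤ ∑ p : Fin n × Fin n, (if p.1 = p.2 then 0 else
            (q p.1 + q p.2) - 4 * (c p.1 p.2 ^ 2 * (q p.1 * q p.2))) :=
          Finset.sum_le_sum fun p _ => hG2 p
      _ = (∑ p : Fin n × Fin n, (if p.1 = p.2 then 0 else q p.1 + q p.2))
          - 4 * ∑ p : Fin n × Fin n, (if p.1 = p.2 then 0 else c p.1 p.2 ^ 2 * (q p.1 * q p.2)) := by
          rw [Finset.mul_sum, ← Finset.sum_sub_distrib]
          refine Finset.sum_congr rfl fun p _ => ?_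
          split <;> ring
      _ = 2 * ((n : ℝ) - 1) - 4 * Svis := by
          have hA : ∑ p : Fin n × Fin n, (if p.1 = p.2 then 0 else q p.1 + q p.2)
              = 2 * ((n : ℝ) - 1) := by
            rw [← hsumF2]
            exact (Finset.sum_congr rfl fun p _ => (hF2 p).symm)
          have hB : ∑ p : Fin n × Fin n, (if p.1 = p.2 then 0 else c p.1 p.2 ^ 2 * (q p.1 * q p.2))
              = Svis := by
            rw [hSV, ← Finset.sum_product', Finset.univ_product_univ]
          rw [hA, hB]
  have hCS := Finset.sum_mul_sq_le_sq_mul_sq Finset.univ F G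
  rw [hsum1, hsumF2] at hCS
  have hG2nn : (0 : ℝ) ≤ ∑ p : Fin n × Fin n, G p ^ 2 :=
    Finset.sum_nonneg fun p _ => sq_nonneg _
  have hmain : SumA ^ 2 ≤ 2 * ((n : ℝ) - 1) * (2 * ((n : ℝ) - 1) - 4 * Svis) := by
    calc SumA ^ 2 ≤ 2 * ((n : ℝ) - 1) * ∑ p : Fin n × Fin n, G p ^ 2 := hCS
      _ ≤ 2 * ((n : ℝ) - 1) * (2 * ((n : ℝ) - 1) - 4 * Svis) := by
          apply mul_le_mul_of_nonneg_left hsumG2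
          have : (2 : ℝ) ≤ n := by exact_mod_cast hn
          linarith
  have h4 : SumA ^ 2 + 8 * ((n : ℝ) - 1) * Svis ≤ 4 * ((n : ℝ) - 1) ^ 2 := by nlinarith [hmain]
  have heq1 : (SumA / (2 * (n : ℝ))) ^ 2 + (2 * ((n : ℝ) - 1) / (n : ℝ) ^ 2) * Svis
      = (SumA ^ 2 + 8 * ((n : ℝ) - 1) * Svis) / (4 * (n : ℝ) ^ 2) := by
    field_simp
    ring
  rw [heq1]
  have heq2 : (((n : ℝ) - 1) / n) ^ 2 = (4 * ((n : ℝ) - 1) ^ 2) / (4 * (n : ℝ) ^ 2) := by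
    field_simp
  rw [heq2]
  exact (div_le_div_iff_of_pos_right (by positivity)).mpr h4

end AuxWPD

open AuxWPD in
/-- wave-particle duality for a pure input state of the particle (without
quantum memory) in the `n`-path interferometer with detectors. -/
theorem stmt6 (n m : ℕ) (hn : 2 ≤ n) (d : Fin n → Fin m → ℂ)
    (hd : ∀ i, ip (d i) (d i) = 1)
    (ψ : Fin n → ℂ) (hψ : ip ψ ψ = 1)
    (ρA : Matrix (Fin n) (Fin n) ℂ) (hρA : ρA = vecMulVec ψ (star ψ))
    (q : Fin n → ℝ) (hq : ∀ i, q i = ‖ψ i‖ ^ 2) :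
    (Ps d q - 1 / n) ^ 2 + (Vis d ρA) ^ 2 ≤ (1 - 1 / (n : ℝ)) ^ 2 := by
  have hn0 : (0 : ℝ) < n := by
    have : 0 < n := by omega
    exact_mod_cast this
  have hn2 : (2 : ℝ) ≤ n := by exact_mod_cast hn
  have hq0 : ∀ i, 0 ≤ q i := by
    intro i; rw [hq i]; positivity
  have hq1 : ∑ i, q i = 1 := by
    have h := congrArg Complex.re hψ
    rw [ip, Complex.re_sum] at h
    rw [Complex.one_re] at h
    rw [← h]
    refine Finset.sum_congr rfl fun i _ => ?_
    rw [hq i]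
    rw [Complex.star_def, ← Complex.normSq_eq_conj_mul_self, Complex.ofReal_re,
      Complex.normSq_eq_norm_sq]
  have hc1 : ∀ i k : Fin n, ‖ip (d k) (d i)‖ ^ 2 ≤ 1 := by
    intro i k
    have h := ip_cs (d k) (d i)
    rwa [hd k, hd i, Complex.one_re, mul_one] at h
  obtain ⟨hlb, hub⟩ := Ps_facts hn d hd q hq0 hq1
  set SumA : ℝ := ∑ i, ∑ k, if i = k then 0 else
      Real.sqrt ((q i + q k) ^ 2 - 4 * (q i * q k) * ‖ip (d k) (d i)‖ ^ 2) with hSumA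
  have step1 : (Ps d q - 1 / n) ^ 2 ≤ (SumA / (2 * n)) ^ 2 := by
    have h1 : 0 ≤ Ps d q - 1 / n := by linarith
    have h2 : Ps d q - 1 / n ≤ SumA / (2 * n) := by linarith
    exact pow_le_pow_left₀ h1 h2 2
  have hρ : ∀ i k : Fin n, ‖ρA i k‖ ^ 2 = q i * q k := by
    intro i k
    rw [hρA, Matrix.vecMulVec_apply, Pi.star_apply, norm_mul, norm_star, mul_pow,
      hq i, hq k]
  have hVarg : (2 * ((n : ℝ) - 1) / (n : ℝ) ^ 2) *
      (∑ i, ∑ k, if i = k then 0 else ‖ip (d k) (d i)‖ ^ 2 * ‖ρA i k‖ ^ 2)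
      = (2 * ((n : ℝ) - 1) / (n : ℝ) ^ 2) *
      (∑ i, ∑ k, if i = k then 0 else ‖ip (d k) (d i)‖ ^ 2 * (q i * q k)) := by
    congr 1
    refine Finset.sum_congr rfl fun i _ => Finset.sum_congr rfl fun k _ => ?_
    split
    · rfl
    · rw [hρ i k]
  have hVnn : 0 ≤ (2 * ((n : ℝ) - 1) / (n : ℝ) ^ 2) *
      (∑ i, ∑ k, if i = k then 0 else ‖ip (d k) (d i)‖ ^ 2 * ‖ρA i k‖ ^ 2) := by
    apply mul_nonneg
    · apply div_nonneg <;> nlinarith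
    · refine Finset.sum_nonneg fun i _ => Finset.sum_nonneg fun k _ => ?_
      split
      · exact le_refl 0
      · positivity
  have hVis2 : (Vis d ρA) ^ 2 = (2 * ((n : ℝ) - 1) / (n : ℝ) ^ 2) *
      (∑ i, ∑ k, if i = k then 0 else ‖ip (d k) (d i)‖ ^ 2 * (q i * q k)) := by
    rw [Vis, Real.sq_sqrt hVnn, hVarg]
  have halg := alg_lemma hn q hq0 hq1 (fun i k => ‖ip (d k) (d i)‖) hc1
  have hfrac : (1 : ℝ) - 1 / n = ((n : ℝ) - 1) / n := by
    field_simp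
  rw [hVis2, hfrac]
  calc (Ps d q - 1 / ↑n) ^ 2 + (2 * ((n : ℝ) - 1) / (n : ℝ) ^ 2) *
        (∑ i, ∑ k, if i = k then 0 else ‖ip (d k) (d i)‖ ^ 2 * (q i * q k))
      ≤ (SumA / (2 * n)) ^ 2 + (2 * ((n : ℝ) - 1) / (n : ℝ) ^ 2) *
        (∑ i, ∑ k, if i = k then 0 else ‖ip (d k) (d i)‖ ^ 2 * (q i * q k)) := by
        linarith [step1]
    _ ≤ (((n : ℝ) - 1) / n) ^ 2 := halg
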